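/- Define u(x,t) := t^(−1/5) · ((3/10)·(17/12 − x²·t^(−2/5)))^(1/3) and x_w(t) := t^(1/5) for t > 0, 0 ≤ x ≤ x_w(t). Then: ∂u/∂t = ∂/∂x(u³·∂u/∂x) for all t > 0 and 0 < x < x_w(t); ∂u/∂x(0,t) = 0 for all t > 0; u(x_w(t),t) = (1/2)·t^(−1/5) for all t > 0; ∂u/∂x(x_w(t),t) = (−1/2)·x_w(t)^(−1)·(dx_w/dt)(t)·u(x_w(t),t)^(−3) for all t > 0; and x_w(0) = 0. -/

import Mathlib

open Real

lemma hd_inner (t x : ℝ) :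
    HasDerivAt (fun ξ : ℝ => (3 / 10) * (17 / 12 - ξ ^ 2 * t ^ (-(2 : ℝ) / 5)))
      ((3 / 10) * (-(2 * x * t ^ (-(2 : ℝ) / 5)))) x := by
  have h := (((hasDerivAt_pow 2 x).mul_const (t ^ (-(2:ℝ)/5))).const_sub ((17:ℝ)/12)).const_mul
    ((3:ℝ)/10)
  refine h.congr_deriv ?_
  push_cast
  ring

lemma hd_x {t : ℝ} (x : ℝ)
    (hg : 0 < (3 / 10) * (17 / 12 - x ^ 2 * t ^ (-(2 : ℝ) / 5))) :
    HasDerivAt (fun ξ : ℝ => t ^ (-(1 : ℝ) / 5) *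
        ((3 / 10) * (17 / 12 - ξ ^ 2 * t ^ (-(2 : ℝ) / 5))) ^ ((1 : ℝ) / 3))
      (t ^ (-(1 : ℝ) / 5) * (((3 / 10) * (-(2 * x * t ^ (-(2 : ℝ) / 5)))) * ((1 : ℝ) / 3) *
        ((3 / 10) * (17 / 12 - x ^ 2 * t ^ (-(2 : ℝ) / 5))) ^ ((1 : ℝ) / 3 - 1))) x :=
  ((hd_inner t x).rpow_const (Or.inl hg.ne')).const_mul _

lemma hd_t {t : ℝ} (ht : 0 < t) (x : ℝ)
    (hg : 0 < (3 / 10) * (17 / 12 - x ^ 2 * t ^ (-(2 : ℝ) / 5))) :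
    HasDerivAt (fun τ : ℝ => τ ^ (-(1 : ℝ) / 5) *
        ((3 / 10) * (17 / 12 - x ^ 2 * τ ^ (-(2 : ℝ) / 5))) ^ ((1 : ℝ) / 3))
      ((-(1 : ℝ) / 5 * t ^ (-(1 : ℝ) / 5 - 1)) *
          ((3 / 10) * (17 / 12 - x ^ 2 * t ^ (-(2 : ℝ) / 5))) ^ ((1 : ℝ) / 3)
        + t ^ (-(1 : ℝ) / 5) *
          (((3 / 10) * (-(x ^ 2 * (-(2 : ℝ) / 5 * t ^ (-(2 : ℝ) / 5 - 1))))) * ((1 : ℝ) / 3) *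
          ((3 / 10) * (17 / 12 - x ^ 2 * t ^ (-(2 : ℝ) / 5))) ^ ((1 : ℝ) / 3 - 1))) t := by
  have hA : HasDerivAt (fun τ : ℝ => τ ^ (-(1 : ℝ) / 5)) (-(1 : ℝ) / 5 * t ^ (-(1 : ℝ) / 5 - 1)) t :=
    Real.hasDerivAt_rpow_const (Or.inl ht.ne')
  have hB : HasDerivAt (fun τ : ℝ => (3 / 10) * (17 / 12 - x ^ 2 * τ ^ (-(2 : ℝ) / 5)))
      ((3 / 10) * (-(x ^ 2 * (-(2 : ℝ) / 5 * t ^ (-(2 : ℝ) / 5 - 1))))) t := by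
    have h := (((Real.hasDerivAt_rpow_const (p := -(2:ℝ)/5) (Or.inl ht.ne')).const_mul
      (x ^ 2)).const_sub ((17:ℝ)/12)).const_mul ((3:ℝ)/10)
    exact h
  exact hA.mul (hB.rpow_const (Or.inl hg.ne'))

lemma xw_sq {t : ℝ} (ht : 0 < t) :
    (t ^ ((1 : ℝ) / 5)) ^ 2 * t ^ (-(2 : ℝ) / 5) = 1 := by
  rw [← Real.rpow_natCast (t ^ ((1:ℝ)/5)) 2, ← Real.rpow_mul ht.le, ← Real.rpow_add ht]
  norm_num

lemma cr18 : ((1 : ℝ) / 8) ^ ((1 : ℝ) / 3) = 1 / 2 := by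
  have h : ((1 : ℝ) / 8) = ((1 : ℝ) / 2) ^ (3 : ℝ) := by
    rw [show (3:ℝ) = ((3:ℕ):ℝ) by norm_num, Real.rpow_natCast]; norm_num
  rw [h, ← Real.rpow_mul (by norm_num)]
  norm_num

lemma cr18' : ((1 : ℝ) / 8) ^ ((1 : ℝ) / 3 - 1) = 4 := by
  have h : ((1 : ℝ) / 8) = ((1 : ℝ) / 2) ^ (3 : ℝ) := by
    rw [show (3:ℝ) = ((3:ℕ):ℝ) by norm_num, Real.rpow_natCast]; norm_num
  rw [h, ← Real.rpow_mul (by norm_num), show (3:ℝ) * ((1:ℝ)/3 - 1) = ((-2:ℤ):ℝ) by push_cast; ring,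
    Real.rpow_intCast]
  norm_num

lemma flux_eq {t : ℝ} (ht : 0 < t) {ξ : ℝ}
    (hg : 0 < (3 / 10) * (17 / 12 - ξ ^ 2 * t ^ (-(2 : ℝ) / 5))) :
    (t ^ (-(1 : ℝ) / 5) * ((3 / 10) * (17 / 12 - ξ ^ 2 * t ^ (-(2 : ℝ) / 5))) ^ ((1 : ℝ) / 3)) ^ 3 *
      (t ^ (-(1 : ℝ) / 5) * (((3 / 10) * (-(2 * ξ * t ^ (-(2 : ℝ) / 5)))) * ((1 : ℝ) / 3) *
        ((3 / 10) * (17 / 12 - ξ ^ 2 * t ^ (-(2 : ℝ) / 5))) ^ ((1 : ℝ) / 3 - 1)))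
    = -(1 / 5) * t ^ (-(6 : ℝ) / 5) *
        (ξ * ((3 / 10) * (17 / 12 - ξ ^ 2 * t ^ (-(2 : ℝ) / 5))) ^ ((1 : ℝ) / 3)) := by
  set g : ℝ := (3 / 10) * (17 / 12 - ξ ^ 2 * t ^ (-(2 : ℝ) / 5)) with hgdef
  have hX3 : (g ^ ((1 : ℝ) / 3)) ^ (3 : ℕ) = g := by
    rw [← Real.rpow_natCast (g ^ ((1:ℝ)/3)) 3, ← Real.rpow_mul hg.le]
    norm_num
  have hgY : g * g ^ ((1 : ℝ) / 3 - 1) = g ^ ((1 : ℝ) / 3) := by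
    nth_rewrite 1 [← Real.rpow_one g]
    rw [← Real.rpow_add hg]
    norm_num
  have hpp : (t ^ (-(1 : ℝ) / 5)) ^ (3 : ℕ) * t ^ (-(1 : ℝ) / 5) * t ^ (-(2 : ℝ) / 5)
      = t ^ (-(6 : ℝ) / 5) := by
    rw [← Real.rpow_natCast (t ^ (-(1:ℝ)/5)) 3, ← Real.rpow_mul ht.le, ← Real.rpow_add ht,
      ← Real.rpow_add ht]
    norm_num
  linear_combination
    (-(1/5) * ξ * t ^ (-(2:ℝ)/5) * (t ^ (-(1:ℝ)/5)) ^ 4 * g ^ ((1:ℝ)/3 - 1)) * hX3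
    + (-(1/5) * ξ * t ^ (-(2:ℝ)/5) * (t ^ (-(1:ℝ)/5)) ^ 4) * hgY
    + (-(1/5) * ξ * g ^ ((1:ℝ)/3)) * hpp

theorem stmt_17 :
    let u : ℝ → ℝ → ℝ := fun x t =>
      t ^ (-(1 : ℝ) / 5) * ((3 / 10) * (17 / 12 - x ^ 2 * t ^ (-(2 : ℝ) / 5))) ^ ((1 : ℝ) / 3)
    let xw : ℝ → ℝ := fun t => t ^ ((1 : ℝ) / 5)
    (∀ t > (0 : ℝ), ∀ x : ℝ, 0 < x → x < xw t →
      deriv (fun τ => u x τ) t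
        = deriv (fun ξ => (u ξ t) ^ 3 * deriv (fun ξ' => u ξ' t) ξ) x)
    ∧ (∀ t > (0 : ℝ), deriv (fun ξ => u ξ t) 0 = 0)
    ∧ (∀ t > (0 : ℝ), u (xw t) t = (1 / 2) * t ^ (-(1 : ℝ) / 5))
    ∧ (∀ t > (0 : ℝ), deriv (fun ξ => u ξ t) (xw t)
        = (-1 / 2) * (xw t)⁻¹ * deriv xw t * (u (xw t) t) ^ (-3 : ℤ))
    ∧ xw 0 = 0 := by
  intro u xw
  refine ⟨?_, ?_, ?_, ?_, ?_⟩
  · -- PDE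
    intro t ht x hx hxw
    have hs : (0:ℝ) < t ^ (-(2 : ℝ) / 5) := Real.rpow_pos_of_pos ht _
    have hxs : x ^ 2 * t ^ (-(2 : ℝ) / 5) < 1 := by
      have h1 : x ^ 2 < (t ^ ((1 : ℝ) / 5)) ^ 2 := by
        have : x < t ^ ((1 : ℝ) / 5) := hxw
        nlinarith
      calc x ^ 2 * t ^ (-(2 : ℝ) / 5) < (t ^ ((1 : ℝ) / 5)) ^ 2 * t ^ (-(2 : ℝ) / 5) := by
            exact mul_lt_mul_of_pos_right h1 hs
        _ = 1 := xw_sq ht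
    have hgx : 0 < (3 / 10) * (17 / 12 - x ^ 2 * t ^ (-(2 : ℝ) / 5)) := by nlinarith
    have hU : ∀ᶠ ξ in nhds x, ξ ^ 2 * t ^ (-(2 : ℝ) / 5) < 17 / 12 := by
      have hc : ContinuousAt (fun ξ : ℝ => ξ ^ 2 * t ^ (-(2 : ℝ) / 5)) x := by fun_prop
      exact hc.eventually_lt continuousAt_const (by nlinarith)
    have hfeq : (fun ξ => (u ξ t) ^ 3 * deriv (fun ξ' => u ξ' t) ξ) =ᶠ[nhds x]
        (fun ξ => -(1 / 5) * t ^ (-(6 : ℝ) / 5) *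
          (ξ * ((3 / 10) * (17 / 12 - ξ ^ 2 * t ^ (-(2 : ℝ) / 5))) ^ ((1 : ℝ) / 3))) := by
      filter_upwards [hU] with ξ hξ
      have hgξ : 0 < (3 / 10) * (17 / 12 - ξ ^ 2 * t ^ (-(2 : ℝ) / 5)) := by nlinarith
      show (t ^ (-(1 : ℝ) / 5) *
          ((3 / 10) * (17 / 12 - ξ ^ 2 * t ^ (-(2 : ℝ) / 5))) ^ ((1 : ℝ) / 3)) ^ 3 *
          deriv (fun ξ' : ℝ => t ^ (-(1 : ℝ) / 5) *
            ((3 / 10) * (17 / 12 - ξ' ^ 2 * t ^ (-(2 : ℝ) / 5))) ^ ((1 : ℝ) / 3)) ξ = _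
      rw [(hd_x ξ hgξ).deriv]
      exact flux_eq ht hgξ
    have hG : HasDerivAt (fun ξ : ℝ => -(1 / 5) * t ^ (-(6 : ℝ) / 5) *
          (ξ * ((3 / 10) * (17 / 12 - ξ ^ 2 * t ^ (-(2 : ℝ) / 5))) ^ ((1 : ℝ) / 3)))
        (-(1 / 5) * t ^ (-(6 : ℝ) / 5) *
          (1 * ((3 / 10) * (17 / 12 - x ^ 2 * t ^ (-(2 : ℝ) / 5))) ^ ((1 : ℝ) / 3)
            + x * (((3 / 10) * (-(2 * x * t ^ (-(2 : ℝ) / 5)))) * ((1 : ℝ) / 3) *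
              ((3 / 10) * (17 / 12 - x ^ 2 * t ^ (-(2 : ℝ) / 5))) ^ ((1 : ℝ) / 3 - 1)))) x :=
      ((hasDerivAt_id x).mul ((hd_inner t x).rpow_const (Or.inl hgx.ne'))).const_mul _
    show deriv (fun τ : ℝ => τ ^ (-(1 : ℝ) / 5) *
        ((3 / 10) * (17 / 12 - x ^ 2 * τ ^ (-(2 : ℝ) / 5))) ^ ((1 : ℝ) / 3)) t
      = deriv (fun ξ => (u ξ t) ^ 3 * deriv (fun ξ' => u ξ' t) ξ) x
    rw [(hd_t ht x hgx).deriv, hfeq.deriv_eq, hG.deriv]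
    rw [show (-(1:ℝ)/5 - 1) = -(6:ℝ)/5 by norm_num, show (-(2:ℝ)/5 - 1) = -(7:ℝ)/5 by norm_num]
    have hA : t ^ (-(1:ℝ)/5) * t ^ (-(7:ℝ)/5) = t ^ (-(8:ℝ)/5) := by
      rw [← Real.rpow_add ht]; norm_num
    have hB : t ^ (-(6:ℝ)/5) * t ^ (-(2:ℝ)/5) = t ^ (-(8:ℝ)/5) := by
      rw [← Real.rpow_add ht]; norm_num
    linear_combination
      ((1:ℝ)/25 * x ^ 2 *
        ((3 / 10) * (17 / 12 - x ^ 2 * t ^ (-(2 : ℝ) / 5))) ^ ((1 : ℝ) / 3 - 1)) * hA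
      - ((1:ℝ)/25 * x ^ 2 *
        ((3 / 10) * (17 / 12 - x ^ 2 * t ^ (-(2 : ℝ) / 5))) ^ ((1 : ℝ) / 3 - 1)) * hB
  · -- symmetry BC at x = 0
    intro t ht
    have hg : 0 < (3 / 10) * (17 / 12 - (0:ℝ) ^ 2 * t ^ (-(2 : ℝ) / 5)) := by norm_num
    show deriv (fun ξ : ℝ => t ^ (-(1 : ℝ) / 5) *
        ((3 / 10) * (17 / 12 - ξ ^ 2 * t ^ (-(2 : ℝ) / 5))) ^ ((1 : ℝ) / 3)) 0 = 0
    rw [(hd_x 0 hg).deriv]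
    norm_num
  · -- value at the front
    intro t ht
    show t ^ (-(1 : ℝ) / 5) *
        ((3 / 10) * (17 / 12 - (t ^ ((1 : ℝ) / 5)) ^ 2 * t ^ (-(2 : ℝ) / 5))) ^ ((1 : ℝ) / 3)
      = (1 / 2) * t ^ (-(1 : ℝ) / 5)
    rw [xw_sq ht, show ((3:ℝ)/10) * (17/12 - 1) = (1:ℝ)/8 by norm_num, cr18]
    ring
  · -- flux BC at the front
    intro t ht
    have hxsq := xw_sq ht
    have hg : 0 < (3 / 10) * (17 / 12 - (t ^ ((1 : ℝ) / 5)) ^ 2 * t ^ (-(2 : ℝ) / 5)) := by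
      rw [hxsq]; norm_num
    have huval : t ^ (-(1 : ℝ) / 5) *
        ((3 / 10) * (17 / 12 - (t ^ ((1 : ℝ) / 5)) ^ 2 * t ^ (-(2 : ℝ) / 5))) ^ ((1 : ℝ) / 3)
        = 1 / 2 * t ^ (-(1 : ℝ) / 5) := by
      rw [hxsq, show ((3:ℝ)/10) * (17/12 - 1) = (1:ℝ)/8 by norm_num, cr18]; ring
    have e3 : ((1:ℝ) / 2 * t ^ (-(1 : ℝ) / 5)) ^ (-3 : ℤ) = 8 * t ^ ((3:ℝ)/5) := by
      rw [mul_zpow, ← Real.rpow_intCast (t ^ (-(1:ℝ)/5)) (-3), ← Real.rpow_mul ht.le]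
      norm_num
    show deriv (fun ξ : ℝ => t ^ (-(1 : ℝ) / 5) *
        ((3 / 10) * (17 / 12 - ξ ^ 2 * t ^ (-(2 : ℝ) / 5))) ^ ((1 : ℝ) / 3)) (t ^ ((1 : ℝ) / 5))
      = (-1 / 2) * (t ^ ((1 : ℝ) / 5))⁻¹ * deriv (fun τ : ℝ => τ ^ ((1 : ℝ) / 5)) t *
        (t ^ (-(1 : ℝ) / 5) *
          ((3 / 10) * (17 / 12 - (t ^ ((1 : ℝ) / 5)) ^ 2 * t ^ (-(2 : ℝ) / 5))) ^ ((1 : ℝ) / 3))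
          ^ (-3 : ℤ)
    rw [(hd_x (t ^ ((1:ℝ)/5)) hg).deriv, huval, e3,
      (Real.hasDerivAt_rpow_const (p := (1:ℝ)/5) (Or.inl ht.ne')).deriv,
      hxsq, show ((3:ℝ)/10) * (17/12 - 1) = (1:ℝ)/8 by norm_num, cr18',
      ← Real.rpow_neg ht.le, show -((1:ℝ)/5) = -(1:ℝ)/5 by norm_num]
    have h1 : t ^ ((1:ℝ)/5) * t ^ (-(2:ℝ)/5) = t ^ (-(1:ℝ)/5) := by
      rw [← Real.rpow_add ht]; norm_num
    have h4 : t ^ ((1:ℝ)/5 - 1) * t ^ ((3:ℝ)/5) = t ^ (-(1:ℝ)/5) := by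
      rw [← Real.rpow_add ht]; norm_num
    linear_combination ((-4:ℝ)/5 * t ^ (-(1:ℝ)/5)) * h1 - ((-4:ℝ)/5 * t ^ (-(1:ℝ)/5)) * h4
  · -- xw 0 = 0
    show (0:ℝ) ^ ((1 : ℝ) / 5) = 0
    rw [Real.zero_rpow (by norm_num)]
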